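/- Let 0 < p < 1/2 (asymmetric simple random walk with downward drift). Then E(M_n^+) → p/(1 - 2p) as n → ∞. -/

import Mathlib

open Finset Filter

/-- The value `±1` of a single step of the walk, driven by a Boolean. -/
def step (b : Bool) : ℤ := if b then 1 else -1

/-- The partial sum `S_j = X_1 + ⋯ + X_j` of the simple random walk driven by `ω`. -/
def walk {n : ℕ} (ω : Fin n → Bool) (j : ℕ) : ℤ :=
  ∑ i ∈ Finset.univ.filter fun i : Fin n => (i : ℕ) < j, step (ω i)

/-- `M_n^+ = max_{0 ≤ j ≤ n} S_j`. -/
def mplus {n : ℕ} (ω : Fin n → Bool) : ℤ :=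
  (Finset.range (n + 1)).sup' (by simp) (walk ω)

/-- `M_n^- = -min_{0 ≤ j ≤ n} S_j`. -/
def mminus {n : ℕ} (ω : Fin n → Bool) : ℤ :=
  -((Finset.range (n + 1)).inf' (by simp) (walk ω))

/-- The probability weight of the path `ω` when `P{Xᵢ = 1} = p`, `P{Xᵢ = -1} = 1 - p`,
independently over `i`. -/
def wt (p : ℝ) {n : ℕ} (ω : Fin n → Bool) : ℝ :=
  ∏ i, if ω i then p else 1 - p

/-- The probability of an event `A` for a walk of length `n`. -/
noncomputable def prob (p : ℝ) {n : ℕ} (A : Set (Fin n → Bool)) : ℝ :=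
  ∑ ω : Fin n → Bool, A.indicator (wt p) ω

/-- The expectation of a functional `f` of a walk of length `n`. -/
noncomputable def expectation (p : ℝ) {n : ℕ} (f : (Fin n → Bool) → ℝ) : ℝ :=
  ∑ ω : Fin n → Bool, wt p ω * f ω



lemma walk_zero {n : ℕ} (ω : Fin n → Bool) : walk ω 0 = 0 := by
  simp [walk]

lemma walk_succ {n : ℕ} (ω : Fin n → Bool) (j : ℕ) (hj : j < n) :
    walk ω (j+1) = walk ω j + step (ω ⟨j, hj⟩) := by
  unfold walk
  have : (Finset.univ.filter fun i : Fin n => (i : ℕ) < j + 1)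
      = insert ⟨j, hj⟩ (Finset.univ.filter fun i : Fin n => (i : ℕ) < j) := by
    ext i
    simp only [mem_filter, mem_univ, true_and, mem_insert]
    constructor
    · intro h
      rcases Nat.lt_succ_iff_lt_or_eq.1 h with h | h
      · exact Or.inr h
      · exact Or.inl (Fin.ext h)
    · rintro (rfl | h)
      · exact Nat.lt_succ_self j
      · exact h.trans (Nat.lt_succ_self j)
  rw [this, Finset.sum_insert (by simp)]
  ring

lemma walk_succ_le {n : ℕ} (ω : Fin n → Bool) (j : ℕ) (hj : j < n) :
    walk ω (j+1) ≤ walk ω j + 1 := by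
  rw [walk_succ ω j hj]
  have : step (ω ⟨j, hj⟩) ≤ 1 := by unfold step; split <;> omega
  omega

lemma walk_agree {n : ℕ} {ω ω' : Fin n → Bool} {j : ℕ}
    (h : ∀ i : Fin n, (i : ℕ) < j → ω i = ω' i) : walk ω j = walk ω' j := by
  unfold walk
  apply Finset.sum_congr rfl
  intro i hi
  rw [h i (by simpa using hi)]

lemma walk_le_n {n : ℕ} (ω : Fin n → Bool) (j : ℕ) : walk ω j ≤ n := by
  calc walk ω j ≤ ∑ i ∈ Finset.univ.filter fun i : Fin n => (i : ℕ) < j, 1 := by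
        apply Finset.sum_le_sum; intro i _; unfold step; split <;> omega
    _ = ((Finset.univ.filter fun i : Fin n => (i : ℕ) < j).card : ℤ) := by simp
    _ ≤ n := by
        have := Finset.card_filter_le (Finset.univ : Finset (Fin n))
          (fun i : Fin n => (i : ℕ) < j)
        simp only [Finset.card_univ, Fintype.card_fin] at this
        exact_mod_cast this


lemma mplus_nonneg {n : ℕ} (ω : Fin n → Bool) : 0 ≤ mplus ω := by
  have := Finset.le_sup' (walk ω) (Finset.mem_range.2 (Nat.succ_pos n))
  rw [walk_zero] at this
  exact this

lemma mplus_le_n {n : ℕ} (ω : Fin n → Bool) : mplus ω ≤ n := by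
  apply Finset.sup'_le
  intro j _
  exact walk_le_n ω j

lemma le_mplus_iff {n : ℕ} (ω : Fin n → Bool) (k : ℤ) :
    k ≤ mplus ω ↔ ∃ j ≤ n, k ≤ walk ω j := by
  rw [mplus, Finset.le_sup'_iff]
  constructor
  · rintro ⟨j, hj, h⟩; exact ⟨j, by simpa using Nat.lt_succ_iff.1 (Finset.mem_range.1 hj), h⟩
  · rintro ⟨j, hj, h⟩; exact ⟨j, Finset.mem_range.2 (Nat.lt_succ_of_le hj), h⟩

lemma walk_le_mplus {n : ℕ} (ω : Fin n → Bool) {j : ℕ} (hj : j ≤ n) : walk ω j ≤ mplus ω :=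
  Finset.le_sup' (walk ω) (Finset.mem_range.2 (Nat.lt_succ_of_le hj))

/-- hitting predicate -/
def hitP {n : ℕ} (k : ℕ) (ω : Fin n → Bool) (j : ℕ) : Prop := n < j ∨ (k : ℤ) ≤ walk ω j

instance {n k : ℕ} (ω : Fin n → Bool) (j : ℕ) : Decidable (hitP k ω j) := by
  unfold hitP; infer_instance

lemma hitP_ex {n : ℕ} (k : ℕ) (ω : Fin n → Bool) : ∃ j, hitP k ω j :=
  ⟨n + 1, Or.inl (Nat.lt_succ_self n)⟩

/-- the first time the walk reaches level `k` (or `n+1` if never) -/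
def tau {n : ℕ} (k : ℕ) (ω : Fin n → Bool) : ℕ := Nat.find (hitP_ex k ω)

lemma tau_le_n {n k : ℕ} {ω : Fin n → Bool} (h : (k : ℤ) ≤ mplus ω) : tau k ω ≤ n := by
  obtain ⟨j, hj, hw⟩ := (le_mplus_iff ω k).1 h
  exact (Nat.find_le (Or.inr hw)).trans hj

lemma le_walk_tau {n k : ℕ} {ω : Fin n → Bool} (h : (k : ℤ) ≤ mplus ω) :
    (k : ℤ) ≤ walk ω (tau k ω) := by
  have hs := Nat.find_spec (hitP_ex k ω)
  have htn : tau k ω ≤ n := tau_le_n h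
  unfold tau at htn
  rcases hs with h' | h'
  · exact absurd h' (by omega)
  · exact h'

lemma walk_lt_of_lt_tau {n k : ℕ} {ω : Fin n → Bool} {j : ℕ} (hj : j < tau k ω) :
    walk ω j < k ∧ j ≤ n := by
  have := Nat.find_min (hitP_ex k ω) hj
  unfold hitP at this
  push_neg at this
  exact ⟨this.2, by omega⟩

lemma tau_pos {n k : ℕ} (hk : 1 ≤ k) (ω : Fin n → Bool) : 0 < tau k ω := by
  rcases Nat.eq_zero_or_pos (tau k ω) with h | h
  swap
  · exact h
  · exfalso
    have := Nat.find_spec (hitP_ex k ω)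
    rw [show tau k ω = Nat.find (hitP_ex k ω) from rfl] at h
    rw [h] at this
    rcases this with h' | h'
    · omega
    · rw [walk_zero] at h'; omega

lemma walk_tau_eq {n k : ℕ} {ω : Fin n → Bool} (hk : 1 ≤ k) (h : (k : ℤ) ≤ mplus ω) :
    walk ω (tau k ω) = (k : ℤ) := by
  set t := tau k ω with ht
  have hpos : 0 < t := tau_pos hk ω
  have htn : t ≤ n := tau_le_n h
  have hlt : walk ω (t - 1) < k := (walk_lt_of_lt_tau (by omega)).1
  have hle := walk_succ_le ω (t - 1) (by omega)
  rw [show t - 1 + 1 = t by omega] at hle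
  have h2 := le_walk_tau h
  rw [← ht] at h2
  omega


noncomputable def refl0 {n : ℕ} (k : ℕ) (ω : Fin n → Bool) : Fin n → Bool :=
  fun i => if (i : ℕ) < tau k ω then ω i else !(ω i)

lemma walk_refl0 {n k : ℕ} (ω : Fin n → Bool) {j : ℕ} (hj : j ≤ tau k ω) :
    walk (refl0 k ω) j = walk ω j := by
  apply walk_agree
  intro i hi
  unfold refl0
  rw [if_pos (by omega)]

lemma mem_refl0 {n k : ℕ} {ω : Fin n → Bool} (hk : 1 ≤ k) (h : (k : ℤ) ≤ mplus ω) :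
    (k : ℤ) ≤ mplus (refl0 k ω) := by
  have : walk (refl0 k ω) (tau k ω) = k := by
    rw [walk_refl0 ω le_rfl, walk_tau_eq hk h]
  rw [← this]
  exact walk_le_mplus _ (tau_le_n h)

lemma tau_refl0 {n k : ℕ} {ω : Fin n → Bool} (hk : 1 ≤ k) (h : (k : ℤ) ≤ mplus ω) :
    tau k (refl0 k ω) = tau k ω := by
  apply le_antisymm
  · apply Nat.find_le
    right
    rw [walk_refl0 ω le_rfl, walk_tau_eq hk h]
  · by_contra hc
    push_neg at hc
    have h1 := walk_lt_of_lt_tau hc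
    have h2 : hitP k (refl0 k ω) (tau k (refl0 k ω)) := Nat.find_spec (hitP_ex k (refl0 k ω))
    rcases h2 with h2 | h2
    · exact absurd h2 (by have := (walk_lt_of_lt_tau hc).2; change ¬ (n < tau k (refl0 k ω)); omega)
    · rw [walk_refl0 ω (le_of_lt hc)] at h2
      omega

lemma refl0_refl0 {n k : ℕ} {ω : Fin n → Bool} (hk : 1 ≤ k) (h : (k : ℤ) ≤ mplus ω) :
    refl0 k (refl0 k ω) = ω := by
  funext i
  rw [show refl0 k (refl0 k ω) i
      = if (i : ℕ) < tau k (refl0 k ω) then refl0 k ω i else !(refl0 k ω i) from rfl,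
    tau_refl0 hk h]
  unfold refl0
  by_cases hi : (i : ℕ) < tau k ω
  · simp [hi]
  · simp [hi]

lemma wt_refl0 {n k : ℕ} {p : ℝ} (hp : 0 < p) {ω : Fin n → Bool} (hk : 1 ≤ k)
    (h : (k : ℤ) ≤ mplus ω) :
    wt (1 - p) (refl0 k ω) = ((1 - p) / p) ^ k * wt p ω := by
  set q := 1 - p with hq
  set t := tau k ω with ht
  unfold wt refl0
  rw [show (1 : ℝ) - q = p by rw [hq]; ring]
  rw [← Finset.prod_filter_mul_prod_filter_not Finset.univ (fun i : Fin n => (i : ℕ) < t),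
      ← Finset.prod_filter_mul_prod_filter_not Finset.univ (fun i : Fin n => (i : ℕ) < t)]
  have e2 : ∀ s : Finset (Fin n), (∏ i ∈ s, if (if (i:ℕ) < t then ω i else !(ω i)) = true then q else p)
      = ∏ i ∈ s, (if (i:ℕ) < t then (if ω i then q else p) else (if ω i then p else q)) := by
    intro s
    apply Finset.prod_congr rfl
    intro i _
    by_cases hi : (i : ℕ) < t <;> by_cases hw : ω i <;> simp [hi, hw]
  rw [e2, e2]
  have e3 : (∏ i ∈ Finset.univ.filter (fun i : Fin n => ¬((i:ℕ) < t)),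
        (if (i:ℕ) < t then (if ω i then q else p) else (if ω i then p else q)))
      = ∏ i ∈ Finset.univ.filter (fun i : Fin n => ¬((i:ℕ) < t)), (if ω i then p else q) := by
    apply Finset.prod_congr rfl
    intro i hi
    rw [if_neg (by simpa using (Finset.mem_filter.1 hi).2)]
  have e4 : (∏ i ∈ Finset.univ.filter (fun i : Fin n => (i:ℕ) < t),
        (if (i:ℕ) < t then (if ω i then q else p) else (if ω i then p else q)))
      = ∏ i ∈ Finset.univ.filter (fun i : Fin n => (i:ℕ) < t), (if ω i then q else p) := by
    apply Finset.prod_congr rfl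
    intro i hi
    rw [if_pos (by simpa using (Finset.mem_filter.1 hi).2)]
  rw [e3, e4]
  set S := Finset.univ.filter (fun i : Fin n => (i:ℕ) < t) with hS
  set u := (S.filter (fun i => ω i = true)).card with hu
  set d := (S.filter (fun i => ¬(ω i = true))).card with hd
  have ew : walk ω t = (u : ℤ) - d := by
    unfold walk
    rw [← hS]
    have : ∀ i ∈ S, step (ω i) = if ω i = true then (1:ℤ) else -1 := by
      intro i _; rfl
    rw [Finset.sum_congr rfl this, Finset.sum_ite, Finset.sum_const, Finset.sum_const]
    simp [hu, hd]
    ring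
  have hud : u = d + k := by
    have := walk_tau_eq hk h
    rw [← ht, ew] at this
    omega
  have eq1 : (∏ i ∈ S, (if ω i then q else p)) = q ^ u * p ^ d := by
    rw [Finset.prod_ite, Finset.prod_const, Finset.prod_const]
  have eq2 : (∏ i ∈ S, (if ω i then p else q)) = p ^ u * q ^ d := by
    rw [Finset.prod_ite, Finset.prod_const, Finset.prod_const]
  rw [eq1, eq2, hud]
  have hpne : p ≠ 0 := ne_of_gt hp
  field_simp
  rw [← hq, div_pow, pow_add, pow_add, div_mul_eq_mul_div, div_mul_eq_mul_div, div_mul_eq_mul_div,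
    eq_div_iff (pow_ne_zero k hpne)]
  ring


lemma sum_wt (p : ℝ) (n : ℕ) : ∑ ω : Fin n → Bool, wt p ω = 1 := by
  unfold wt
  rw [← Fintype.piFinset_univ, ← Finset.prod_univ_sum (t := fun _ : Fin n => (Finset.univ : Finset Bool)) (f := fun _ b => if b = true then p else 1 - p)]
  have : ∀ i : Fin n, (∑ b : Bool, if b then p else 1 - p) = 1 := by
    intro i; simp
  rw [Finset.prod_congr rfl fun i _ => this i, Finset.prod_const_one]

lemma wt_nonneg {p : ℝ} (hp0 : 0 ≤ p) (hp1 : p ≤ 1) {n : ℕ} (ω : Fin n → Bool) :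
    0 ≤ wt p ω := by
  unfold wt
  apply Finset.prod_nonneg
  intro i _
  split <;> [exact hp0; linarith]

lemma prob_eq_sum_filter (p : ℝ) {n : ℕ} (A : Set (Fin n → Bool)) [DecidablePred (· ∈ A)] :
    prob p A = ∑ ω ∈ Finset.univ.filter (· ∈ A), wt p ω := by
  unfold prob
  rw [Finset.sum_filter]
  apply Finset.sum_congr rfl
  intro ω _
  rw [Set.indicator_apply]

lemma prob_nonneg {p : ℝ} (hp0 : 0 ≤ p) (hp1 : p ≤ 1) {n : ℕ} (A : Set (Fin n → Bool)) :
    0 ≤ prob p A := by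
  apply Finset.sum_nonneg
  intro ω _
  exact Set.indicator_nonneg (fun x _ => wt_nonneg hp0 hp1 x) ω

lemma prob_le_one {p : ℝ} (hp0 : 0 ≤ p) (hp1 : p ≤ 1) {n : ℕ} (A : Set (Fin n → Bool)) :
    prob p A ≤ 1 := by
  rw [← sum_wt p n]
  apply Finset.sum_le_sum
  intro ω _
  exact Set.indicator_le_self' (fun x _ => wt_nonneg hp0 hp1 x) ω

lemma prob_mono {p : ℝ} (hp0 : 0 ≤ p) (hp1 : p ≤ 1) {n : ℕ} {A B : Set (Fin n → Bool)}
    (h : A ⊆ B) : prob p A ≤ prob p B := by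
  apply Finset.sum_le_sum
  intro ω _
  exact Set.indicator_le_indicator_of_subset h (fun x => wt_nonneg hp0 hp1 x) ω

lemma prob_compl (p : ℝ) {n : ℕ} (A : Set (Fin n → Bool)) :
    prob p A + prob p Aᶜ = 1 := by
  classical
  unfold prob
  rw [← Finset.sum_add_distrib, ← sum_wt p n]
  apply Finset.sum_congr rfl
  intro ω _
  by_cases h : ω ∈ A
  · rw [Set.indicator_of_mem h, Set.indicator_of_notMem (by simp [h]), add_zero]
  · rw [Set.indicator_of_notMem h, Set.indicator_of_mem (by simp [h]), zero_add]

/-- The reflection identity. -/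
lemma prob_reflect {p : ℝ} (hp : 0 < p) {n : ℕ} {k : ℕ} (hk : 1 ≤ k) :
    prob (1 - p) {ω : Fin n → Bool | (k : ℤ) ≤ mplus ω}
      = ((1 - p) / p) ^ k * prob p {ω : Fin n → Bool | (k : ℤ) ≤ mplus ω} := by
  classical
  rw [prob_eq_sum_filter, prob_eq_sum_filter, Finset.mul_sum]
  refine (Finset.sum_nbij' (refl0 k) (refl0 k) ?_ ?_ ?_ ?_ ?_).symm
  · intro ω hω
    simp only [Finset.mem_filter, Finset.mem_univ, true_and, Set.mem_setOf_eq] at *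
    exact mem_refl0 hk hω
  · intro ω hω
    simp only [Finset.mem_filter, Finset.mem_univ, true_and, Set.mem_setOf_eq] at *
    exact mem_refl0 hk hω
  · intro ω hω
    simp only [Finset.mem_filter, Finset.mem_univ, true_and, Set.mem_setOf_eq] at hω
    exact refl0_refl0 hk hω
  · intro ω hω
    simp only [Finset.mem_filter, Finset.mem_univ, true_and, Set.mem_setOf_eq] at hω
    exact refl0_refl0 hk hω
  · intro ω hω
    simp only [Finset.mem_filter, Finset.mem_univ, true_and, Set.mem_setOf_eq] at hω
    exact (wt_refl0 hp hk hω).symm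


lemma int_layer (n : ℕ) (m : ℤ) (hm0 : 0 ≤ m) (hmn : m ≤ n) :
    (m : ℝ) = ∑ k ∈ Finset.Icc 1 n, (if (k : ℤ) ≤ m then (1:ℝ) else 0) := by
  have : (∑ k ∈ Finset.Icc 1 n, (if (k : ℤ) ≤ m then (1:ℝ) else 0))
      = ((Finset.Icc 1 n).filter (fun k : ℕ => (k : ℤ) ≤ m)).card := by
    rw [Finset.sum_ite, Finset.sum_const, Finset.sum_const]
    simp
  rw [this]
  have : (Finset.Icc 1 n).filter (fun k : ℕ => (k : ℤ) ≤ m) = Finset.Icc 1 m.toNat := by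
    ext a
    simp only [Finset.mem_filter, Finset.mem_Icc]
    omega
  rw [this, Nat.card_Icc]
  have : m.toNat + 1 - 1 = m.toNat := by omega
  rw [this]
  exact_mod_cast (Int.toNat_of_nonneg hm0).symm

lemma expectation_mplus_eq (p : ℝ) (n : ℕ) :
    expectation p (fun ω : Fin n → Bool => (mplus ω : ℝ))
      = ∑ k ∈ Finset.Icc 1 n, prob p {ω : Fin n → Bool | (k : ℤ) ≤ mplus ω} := by
  classical
  unfold expectation
  have : ∀ ω : Fin n → Bool, wt p ω * ((mplus ω : ℤ) : ℝ)
      = ∑ k ∈ Finset.Icc 1 n, (if (k : ℤ) ≤ mplus ω then wt p ω else 0) := by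
    intro ω
    rw [int_layer n (mplus ω) (mplus_nonneg ω) (mplus_le_n ω), Finset.mul_sum]
    apply Finset.sum_congr rfl
    intro k _
    by_cases h : (k : ℤ) ≤ mplus ω <;> simp [h]
  rw [Finset.sum_congr rfl fun ω _ => this ω, Finset.sum_comm]
  apply Finset.sum_congr rfl
  intro k _
  unfold prob
  apply Finset.sum_congr rfl
  intro ω _
  rw [Set.indicator_apply]
  simp only [Set.mem_setOf_eq]


lemma walk_n {n : ℕ} (ω : Fin n → Bool) : walk ω n = ∑ i, step (ω i) := by
  unfold walk
  congr 1
  apply Finset.filter_true_of_mem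
  intro i _
  exact i.isLt

lemma walk_n_eq_counts {n : ℕ} (ω : Fin n → Bool) :
    walk ω n = ((Finset.univ.filter fun i => ω i = true).card : ℤ)
      - ((Finset.univ.filter fun i => ¬(ω i = true)).card : ℤ) := by
  rw [walk_n]
  have : ∀ i ∈ Finset.univ, step (ω i) = if ω i = true then (1:ℤ) else -1 := by
    intro i _; rfl
  rw [Finset.sum_congr rfl this, Finset.sum_ite, Finset.sum_const, Finset.sum_const]
  simp
  ring

/-- the moment generating function identity -/
lemma mgf_eq (p t : ℝ) (n : ℕ) :
    ∑ ω : Fin n → Bool, wt (1-p) ω * (∏ i, if ω i then t⁻¹ else t)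
      = ((1-p) * t⁻¹ + p * t) ^ n := by
  have h1 : ∀ ω : Fin n → Bool, wt (1-p) ω * (∏ i, if ω i then t⁻¹ else t)
      = ∏ i, (if ω i then (1-p) * t⁻¹ else p * t) := by
    intro ω
    unfold wt
    rw [← Finset.prod_mul_distrib]
    apply Finset.prod_congr rfl
    intro i _
    by_cases h : ω i <;> simp [h]
  rw [Finset.sum_congr rfl fun ω _ => h1 ω]
  rw [← Fintype.piFinset_univ, ← Finset.prod_univ_sum
    (t := fun _ : Fin n => (Finset.univ : Finset Bool))
    (f := fun _ b => if b = true then (1-p) * t⁻¹ else p * t)]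
  have : ∀ i : Fin n, (∑ b : Bool, if b = true then (1-p)*t⁻¹ else p*t)
      = (1-p) * t⁻¹ + p * t := by
    intro i; simp [add_comm]
  rw [Finset.prod_congr rfl fun i _ => this i, Finset.prod_const]
  simp

lemma chernoff (p t : ℝ) (hp0 : 0 < p) (hp1 : p < 1) (ht : 1 ≤ t) (k n : ℕ) (hk : 1 ≤ k) :
    prob (1-p) ({ω : Fin n → Bool | (k:ℤ) ≤ walk ω n}ᶜ)
      ≤ t ^ (k-1) * ((1-p) * t⁻¹ + p * t) ^ n := by
  classical
  have ht0 : 0 < t := lt_of_lt_of_le one_pos ht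
  rw [prob_eq_sum_filter]
  have key : ∀ ω : Fin n → Bool, ¬((k:ℤ) ≤ walk ω n) →
      (1:ℝ) ≤ t ^ (k-1) * ∏ i, (if ω i then t⁻¹ else t) := by
    intro ω hω
    set u := (Finset.univ.filter fun i => ω i = true).card with hu
    set d := (Finset.univ.filter fun i => ¬(ω i = true)).card with hd
    have hw := walk_n_eq_counts ω
    have hud : u ≤ (k-1) + d := by
      rw [← hu, ← hd] at hw
      omega
    have : (∏ i, if ω i then t⁻¹ else t) = (t⁻¹) ^ u * t ^ d := by
      rw [Finset.prod_ite, Finset.prod_const, Finset.prod_const]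
    have h2 : t ^ u ≤ t ^ ((k-1)+d) := pow_le_pow_right₀ ht hud
    have h3 : (0:ℝ) < t ^ u := pow_pos ht0 u
    calc (1:ℝ) = t ^ u * (t ^ u)⁻¹ := (mul_inv_cancel₀ (ne_of_gt h3)).symm
      _ ≤ t ^ ((k-1)+d) * (t ^ u)⁻¹ := by
          apply mul_le_mul_of_nonneg_right h2 (by positivity)
      _ = t ^ (k-1) * ∏ i, (if ω i then t⁻¹ else t) := by
          rw [this, pow_add, inv_pow]; ring
  have hq0 : (0:ℝ) ≤ 1 - p := by linarith
  have hq1 : (1:ℝ) - p ≤ 1 := by linarith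
  calc (∑ ω ∈ Finset.univ.filter (· ∈ ({ω : Fin n → Bool | (k:ℤ) ≤ walk ω n}ᶜ)), wt (1-p) ω)
      ≤ ∑ ω ∈ Finset.univ.filter (· ∈ ({ω : Fin n → Bool | (k:ℤ) ≤ walk ω n}ᶜ)),
          wt (1-p) ω * (t ^ (k-1) * ∏ i, (if ω i then t⁻¹ else t)) := by
        apply Finset.sum_le_sum
        intro ω hω
        have hmem : ¬((k:ℤ) ≤ walk ω n) := by
          have := (Finset.mem_filter.1 hω).2
          simpa using this
        exact le_mul_of_one_le_right (wt_nonneg hq0 hq1 ω) (key ω hmem)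
    _ ≤ ∑ ω : Fin n → Bool, wt (1-p) ω * (t ^ (k-1) * ∏ i, (if ω i then t⁻¹ else t)) := by
        apply Finset.sum_le_sum_of_subset_of_nonneg (Finset.filter_subset _ _)
        intro ω _ _
        apply mul_nonneg (wt_nonneg hq0 hq1 ω)
        apply mul_nonneg (by positivity)
        apply Finset.prod_nonneg
        intro i _
        split <;> positivity
    _ = t ^ (k-1) * ∑ ω : Fin n → Bool, wt (1-p) ω * ∏ i, (if ω i then t⁻¹ else t) := by
        rw [Finset.mul_sum]
        apply Finset.sum_congr rfl
        intro ω _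
        ring
    _ = t ^ (k-1) * ((1-p) * t⁻¹ + p * t) ^ n := by rw [mgf_eq]


theorem statement5 (p : ℝ) (hp0 : 0 < p) (hp1 : p < 1/2) :
    Tendsto (fun n : ℕ => expectation p (fun ω : Fin n → Bool => (mplus ω : ℝ)))
      atTop (nhds (p / (1 - 2 * p))) := by
  have hq0 : (0:ℝ) < 1 - p := by linarith
  have hq1 : (1:ℝ) - p ≤ 1 := by linarith
  have hp1' : p ≤ 1 := by linarith
  set r : ℝ := p / (1 - p) with hr
  have hr0 : 0 < r := div_pos hp0 hq0
  have hr1 : r < 1 := by rw [hr, div_lt_one hq0]; linarith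
  set L : ℝ := p / (1 - 2 * p) with hL
  have hrlt : (0:ℝ) < 1 - r := by linarith
  have hLr : r / (1 - r) = L := by
    rw [hL, div_eq_div_iff (ne_of_gt hrlt) (show (1:ℝ) - 2*p ≠ 0 by intro h; nlinarith)]
    rw [hr]
    field_simp
    ring
  -- the key identity : prob p A_k = r^k * prob (1-p) A_k
  have key : ∀ (n k : ℕ), 1 ≤ k →
      prob p {ω : Fin n → Bool | (k : ℤ) ≤ mplus ω}
        = r ^ k * prob (1-p) {ω : Fin n → Bool | (k : ℤ) ≤ mplus ω} := by
    intro n k hk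
    rw [prob_reflect hp0 hk, ← mul_assoc, ← mul_pow, hr]
    rw [show p / (1-p) * ((1-p)/p) = 1 by field_simp]
    rw [one_pow, one_mul]
  -- geometric partial sums
  have hrne : (1:ℝ) - r ≠ 0 := ne_of_gt hrlt
  have hsK0 : ∀ K : ℕ, (∑ k ∈ Finset.Icc 1 K, r ^ k) = (r - r ^ (K+1)) / (1 - r) := by
    intro K
    induction K with
    | zero => simp
    | succ K ih =>
      rw [Finset.sum_Icc_succ_top (by omega), ih]
      field_simp
      ring
  set s : ℕ → ℝ := fun K => ∑ k ∈ Finset.Icc 1 K, r ^ k with hs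
  have hsK : ∀ K, s K = (r - r ^ (K+1)) / (1 - r) := hsK0
  have hs_nonneg : ∀ K, 0 ≤ s K := by
    intro K
    apply Finset.sum_nonneg
    intro k _
    positivity
  have hs_le_L : ∀ K, s K ≤ L := by
    intro K
    rw [hsK, ← hLr]
    have h1 : (0:ℝ) < 1 - r := by linarith
    gcongr
    have : 0 ≤ r ^ (K+1) := by positivity
    linarith
  have hsT : Tendsto s atTop (nhds L) := by
    have h1 : Tendsto (fun K : ℕ => r ^ (K+1)) atTop (nhds 0) := by
      have := tendsto_pow_atTop_nhds_zero_of_lt_one (le_of_lt hr0) hr1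
      exact this.comp (tendsto_add_atTop_nat 1)
    have h2 : Tendsto (fun K : ℕ => (r - r ^ (K+1)) / (1 - r)) atTop
        (nhds ((r - 0) / (1 - r))) := ((tendsto_const_nhds.sub h1).div_const (1 - r))
    rw [sub_zero, hLr] at h2
    exact h2.congr fun K => (hsK K).symm
  -- upper bound
  have upper : ∀ n : ℕ, expectation p (fun ω : Fin n → Bool => (mplus ω : ℝ)) ≤ L := by
    intro n
    rw [expectation_mplus_eq]
    calc (∑ k ∈ Finset.Icc 1 n, prob p {ω : Fin n → Bool | (k : ℤ) ≤ mplus ω})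
        ≤ ∑ k ∈ Finset.Icc 1 n, r ^ k := by
          apply Finset.sum_le_sum
          intro k hk
          rw [key n k (Finset.mem_Icc.1 hk).1]
          have := prob_le_one (le_of_lt hq0) hq1 {ω : Fin n → Bool | (k : ℤ) ≤ mplus ω}
          nlinarith [pow_pos hr0 k, prob_nonneg (le_of_lt hq0) hq1
            {ω : Fin n → Bool | (k : ℤ) ≤ mplus ω}]
      _ ≤ L := hs_le_L n
  -- lower bound: for n ≥ K, E_n ≥ s K * prob_q(walk_n ≥ K)
  have lower : ∀ K n : ℕ, 1 ≤ K → K ≤ n →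
      s K * prob (1-p) {ω : Fin n → Bool | (K : ℤ) ≤ walk ω n}
        ≤ expectation p (fun ω : Fin n → Bool => (mplus ω : ℝ)) := by
    intro K n hK hKn
    rw [expectation_mplus_eq]
    set c := prob (1-p) {ω : Fin n → Bool | (K : ℤ) ≤ walk ω n} with hc
    calc s K * c = ∑ k ∈ Finset.Icc 1 K, r ^ k * c := by rw [hs, Finset.sum_mul]
      _ ≤ ∑ k ∈ Finset.Icc 1 K, prob p {ω : Fin n → Bool | (k : ℤ) ≤ mplus ω} := by
          apply Finset.sum_le_sum
          intro k hk
          obtain ⟨hk1, hkK⟩ := Finset.mem_Icc.1 hk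
          rw [key n k hk1]
          apply mul_le_mul_of_nonneg_left _ (by positivity)
          rw [hc]
          apply prob_mono (le_of_lt hq0) hq1
          intro ω hω
          simp only [Set.mem_setOf_eq] at *
          calc (k : ℤ) ≤ (K : ℤ) := by exact_mod_cast hkK
            _ ≤ walk ω n := hω
            _ ≤ mplus ω := walk_le_mplus ω le_rfl
      _ ≤ ∑ k ∈ Finset.Icc 1 n, prob p {ω : Fin n → Bool | (k : ℤ) ≤ mplus ω} := by
          apply Finset.sum_le_sum_of_subset_of_nonneg
          · exact Finset.Icc_subset_Icc_right hKn
          · intro k _ _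
            exact prob_nonneg (le_of_lt hp0) hp1' _
  -- Chernoff specialization
  set t : ℝ := (2*p)⁻¹ with htdef
  have h2p : (0:ℝ) < 2*p := by linarith
  have ht1 : 1 ≤ t := by
    have hinv : t * (2*p) = 1 := by rw [htdef]; field_simp
    nlinarith
  set ρ : ℝ := (1-p) * t⁻¹ + p * t with hρdef
  have hρval : ρ = (1-p)*(2*p) + 1/2 := by
    rw [hρdef, htdef, inv_inv]
    have : p * (2*p)⁻¹ = 1/2 := by field_simp
    rw [this]
  have hρ0 : 0 ≤ ρ := by rw [hρval]; nlinarith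
  have hρ1 : ρ < 1 := by
    rw [hρval]
    nlinarith [mul_pos (show (0:ℝ) < 1-2*p by linarith) (show (0:ℝ) < 1-2*p by linarith)]
  apply tendsto_order.2
  constructor
  · intro b hb
    obtain ⟨K, hbK, hK1⟩ : ∃ K, b < s K ∧ 1 ≤ K :=
      (((tendsto_order.1 hsT).1 b hb).and (eventually_ge_atTop 1)).exists
    have hρT : Tendsto (fun n : ℕ => ρ ^ n) atTop (nhds 0) :=
      tendsto_pow_atTop_nhds_zero_of_lt_one hρ0 hρ1
    have hgT : Tendsto (fun n : ℕ => s K * (1 - t^(K-1) * ρ^n)) atTop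
        (nhds (s K * (1 - t^(K-1) * 0))) :=
      tendsto_const_nhds.mul (tendsto_const_nhds.sub (tendsto_const_nhds.mul hρT))
    rw [mul_zero, sub_zero, mul_one] at hgT
    have hev1 := (tendsto_order.1 hgT).1 b hbK
    filter_upwards [hev1, eventually_ge_atTop K] with n h1 h2
    have hcher := chernoff p t hp0 (by linarith) ht1 K n hK1
    rw [← hρdef] at hcher
    have hcompl := prob_compl (1-p) {ω : Fin n → Bool | (K:ℤ) ≤ walk ω n}
    have hc_ge : 1 - t^(K-1) * ρ^n
        ≤ prob (1-p) {ω : Fin n → Bool | (K:ℤ) ≤ walk ω n} := by linarith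
    have hmul := mul_le_mul_of_nonneg_left hc_ge (hs_nonneg K)
    have hlow := lower K n hK1 h2
    calc b < s K * (1 - t^(K-1) * ρ^n) := h1
      _ ≤ s K * prob (1-p) {ω : Fin n → Bool | (K:ℤ) ≤ walk ω n} := hmul
      _ ≤ _ := hlow
  · intro b hb
    exact Eventually.of_forall fun n => lt_of_le_of_lt (upper n) hb
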